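/- If for all logit configurations o the sampled softmax gradient estimator is unbiased for the positive class, i.e. E[exp(o_1)/(exp(o_1)+∑_{k=2}^{m+1}exp(o_{s_k})/(m q_{s_k}))] = exp(o_1)/∑_{j=1}^n exp(o_j), then q must be the softmax distribution q_j = exp(o_j)/∑_{l=2}^n exp(o_l). -/

import Mathlib

open Finset Real

/-- If for every logit configuration the sampled softmax estimator for the
positive class is unbiased, then the sampling distribution must be the
softmax distribution over the negative classes. -/
theorem unbiased_implies_softmax_sampling {ι : Type*} [Fintype ι]
    (hn : 2 ≤ Fintype.card ι) (m : ℕ) (hm : 2 ≤ m)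
    (q : ℝ → (ι → ℝ) → ι → ℝ)
    (hqpos : ∀ o1 o j, 0 < q o1 o j)
    (hq1 : ∀ o1 o, ∑ j, q o1 o j = 1)
    (hunb : ∀ (o1 : ℝ) (o : ι → ℝ),
      ∑ s : Fin m → ι, (∏ k, q o1 o (s k)) *
          (Real.exp o1 /
            (Real.exp o1 + ∑ k, Real.exp (o (s k)) / (m * q o1 o (s k)))) =
        Real.exp o1 / (Real.exp o1 + ∑ j, Real.exp (o j))) :
    ∀ (o1 : ℝ) (o : ι → ℝ) (j : ι),
      q o1 o j = Real.exp (o j) / ∑ l, Real.exp (o l) := by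
  intro o1 o j
  classical
  set a := Real.exp o1 with ha
  set T := (∑ l, Real.exp (o l)) with hT
  have hapos : 0 < a := Real.exp_pos _
  have hTpos : 0 < T :=
    Finset.sum_pos (fun l _ => Real.exp_pos _) ⟨j, Finset.mem_univ j⟩
  set Q : ι → ℝ := q o1 o with hQ
  have hQpos : ∀ i, 0 < Q i := fun i => hqpos o1 o i
  have hQ1 : (∑ i, Q i) = 1 := hq1 o1 o
  have hm0 : (0:ℝ) < (m:ℝ) := by
    have : 0 < m := lt_of_lt_of_le (by norm_num) hm
    exact_mod_cast this
  set g : ι → ℝ := fun i => Real.exp (o i) / ((m:ℝ) * Q i) with hg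
  have hgpos : ∀ i, 0 < g i := fun i => by
    apply div_pos (Real.exp_pos _) (mul_pos hm0 (hQpos i))
  set P : (Fin m → ι) → ℝ := fun s => ∏ k, Q (s k) with hP
  set X : (Fin m → ι) → ℝ := fun s => ∑ k, g (s k) with hX
  have hPpos : ∀ s, 0 < P s := fun s =>
    Finset.prod_pos (fun k _ => hQpos (s k))
  have hmne : Nonempty (Fin m) := ⟨⟨0, by omega⟩⟩
  have hXpos : ∀ s, 0 < X s := fun s =>
    Finset.sum_pos (fun k _ => hgpos (s k)) Finset.univ_nonempty
  -- total probability
  have hPsum : (∑ s : Fin m → ι, P s) = 1 := by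
    have h1 : (∏ _k : Fin m, ∑ i, Q i) = ∑ s ∈ Fintype.piFinset (fun _ : Fin m => (Finset.univ : Finset ι)), ∏ k, Q (s k) :=
      Finset.prod_univ_sum _ _
    rw [Fintype.piFinset_univ] at h1
    simp only [hQ1, Finset.prod_const_one] at h1
    exact h1.symm
  -- expectation of X
  have hPX : (∑ s : Fin m → ι, P s * X s) = T := by
    have key : ∀ k : Fin m, (∑ s : Fin m → ι, P s * g (s k)) = T / m := by
      intro k
      set F : Fin m → ι → ℝ := fun k' i => if k' = k then Q i * g i else Q i with hF
      have step1 : (∑ s : Fin m → ι, P s * g (s k)) = ∑ s : Fin m → ι, ∏ k', F k' (s k') := by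
        apply Finset.sum_congr rfl
        intro s _
        have e1 : (∏ k', F k' (s k')) = F k (s k) * ∏ k' ∈ Finset.univ.erase k, F k' (s k') :=
          (Finset.mul_prod_erase Finset.univ (fun k' => F k' (s k')) (Finset.mem_univ k)).symm
        have e2 : (∏ k', Q (s k')) = Q (s k) * ∏ k' ∈ Finset.univ.erase k, Q (s k') :=
          (Finset.mul_prod_erase Finset.univ (fun k' => Q (s k')) (Finset.mem_univ k)).symm
        have e3 : (∏ k' ∈ Finset.univ.erase k, F k' (s k')) = ∏ k' ∈ Finset.univ.erase k, Q (s k') := by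
          apply Finset.prod_congr rfl
          intro k' hk'
          have : k' ≠ k := Finset.ne_of_mem_erase hk'
          simp [hF, this]
        have e4 : F k (s k) = Q (s k) * g (s k) := by simp [hF]
        rw [e1, e3, e4, hP]
        simp only []
        rw [e2]
        ring
      have step2 : (∑ s : Fin m → ι, ∏ k', F k' (s k')) = ∏ k', ∑ i, F k' i := by
        have h1 : (∏ k' : Fin m, ∑ i, F k' i) = ∑ s ∈ Fintype.piFinset (fun _ : Fin m => (Finset.univ : Finset ι)), ∏ k', F k' (s k') :=
          Finset.prod_univ_sum _ _
        rw [Fintype.piFinset_univ] at h1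
        exact h1.symm
      have step3 : (∏ k' : Fin m, ∑ i, F k' i) = T / m := by
        rw [Finset.prod_eq_single k]
        · have : ∀ i, Q i * g i = Real.exp (o i) / m := by
            intro i
            rw [hg]
            field_simp [(hQpos i).ne', ne_of_gt hm0]
          simp only [hF, if_pos rfl]
          rw [Finset.sum_congr rfl (fun i _ => this i), ← Finset.sum_div, ← hT]
        · intro k' _ hk'
          simp [hF, hk', hQ1]
        · intro h; exact absurd (Finset.mem_univ k) h
      rw [step1, step2, step3]
    calc (∑ s : Fin m → ι, P s * X s)
        = ∑ s : Fin m → ι, ∑ k : Fin m, P s * g (s k) := by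
          apply Finset.sum_congr rfl
          intro s _
          rw [hX]
          simp only []
          rw [Finset.mul_sum]
      _ = ∑ k : Fin m, ∑ s : Fin m → ι, P s * g (s k) := Finset.sum_comm
      _ = ∑ k : Fin m, T / m := Finset.sum_congr rfl (fun k _ => key k)
      _ = T := by
          rw [Finset.sum_const, Finset.card_univ, Fintype.card_fin, nsmul_eq_mul]
          field_simp
  -- pointwise convexity identity
  have keyid : ∀ x : ℝ, 0 < x →
      a / (a + x) = a / (a + T) - a * (x - T) / (a + T)^2
        + a * (x - T)^2 / ((a + x) * (a + T)^2) := by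
    intro x hx
    have h1 : a + x ≠ 0 := by positivity
    have h2 : a + T ≠ 0 := by positivity
    field_simp
    ring
  -- the remainder sum vanishes
  have hrem : (∑ s : Fin m → ι, P s * (a * (X s - T)^2 / ((a + X s) * (a + T)^2))) = 0 := by
    have h := hunb o1 o
    have hL : (∑ s : Fin m → ι, (∏ k, q o1 o (s k)) *
          (Real.exp o1 / (Real.exp o1 + ∑ k, Real.exp (o (s k)) / (m * q o1 o (s k)))))
        = ∑ s : Fin m → ι, P s * (a / (a + X s)) := rfl
    rw [hL] at h
    have expand : (∑ s : Fin m → ι, P s * (a / (a + X s)))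
        = (a / (a + T)) * (∑ s : Fin m → ι, P s)
          - (a / (a + T)^2) * ((∑ s : Fin m → ι, P s * X s) - T * ∑ s : Fin m → ι, P s)
          + ∑ s : Fin m → ι, P s * (a * (X s - T)^2 / ((a + X s) * (a + T)^2)) := by
      rw [Finset.mul_sum, Finset.mul_sum, ← Finset.sum_sub_distrib, Finset.mul_sum,
        ← Finset.sum_sub_distrib, ← Finset.sum_add_distrib]
      apply Finset.sum_congr rfl
      intro s _
      rw [keyid (X s) (hXpos s)]
      ring
    rw [expand, hPsum, hPX] at h
    have : (a / (a + T)) * 1 - (a / (a + T)^2) * (T - T * 1) = a / (a + T) := by ring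
    linarith [h, this]
  -- each X s equals T
  have hXT : ∀ s : Fin m → ι, X s = T := by
    intro s
    have hnn : ∀ s' ∈ (Finset.univ : Finset (Fin m → ι)),
        0 ≤ P s' * (a * (X s' - T)^2 / ((a + X s') * (a + T)^2)) := by
      intro s' _
      have h1 : 0 < a + X s' := by linarith [hXpos s']
      have h2 : 0 < a + T := by linarith
      apply mul_nonneg (le_of_lt (hPpos s'))
      apply div_nonneg (by positivity)
      exact le_of_lt (mul_pos h1 (pow_pos h2 2))
    have hzero := (Finset.sum_eq_zero_iff_of_nonneg hnn).mp hrem s (Finset.mem_univ s)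
    have hPne : P s ≠ 0 := ne_of_gt (hPpos s)
    have h1 : a * (X s - T)^2 / ((a + X s) * (a + T)^2) = 0 := by
      rcases mul_eq_zero.mp hzero with h | h
      · exact absurd h hPne
      · exact h
    have hd : (a + X s) * (a + T)^2 ≠ 0 := by
      have := hXpos s; positivity
    rcases div_eq_zero_iff.mp h1 with h2 | h2
    · rcases mul_eq_zero.mp h2 with h3 | h3
      · exact absurd h3 (ne_of_gt hapos)
      · have := pow_eq_zero_iff (n := 2) (by norm_num) |>.mp h3
        linarith [sub_eq_zero.mp this]
    · exact absurd h2 hd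
  -- conclude for the constant sample
  have hconst := hXT (fun _ => j)
  have hXc : X (fun _ => j) = Real.exp (o j) / Q j := by
    rw [hX]
    simp only []
    rw [Finset.sum_const, Finset.card_univ, Fintype.card_fin, nsmul_eq_mul, hg]
    have hQj := (hQpos j).ne'
    field_simp
  rw [hXc] at hconst
  have hQj := (hQpos j).ne'
  rw [div_eq_iff hQj] at hconst
  rw [hQ] at *
  rw [eq_div_iff (ne_of_gt hTpos)]
  linarith [hconst]
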